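/- arXiv:2602.05850 — 2 statements merged into one kernel-verified Lean document; each statement's English description precedes it below -/
import Mathlib

section
/- For each natural number m, the assignment n ↦ {isomorphism classes of n-input m-output Σ-labelled posets}, with the action of a relation R ⊆ [n]×[n'] given by replacing each order relation i ≤ e (from input i) by i' ≤ e for all (i,i') ∈ R and re-closing transitively, defines a functor from FinRel to Set. -/
/-! `n`-input `m`-output `Σ`-labelled posets:
a finite set `V` of elements labelled by `Σ`, and a partial order on
`[n] ⊎ V ⊎ [m]` in which the `n` inputs are minimal and the `m` outputs are
maximal, considered up to label- and order-preserving isomorphism. -/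

/-- Raw data of an `n`-input `m`-output `L`-labelled poset. -/
structure LP (L : Type) (n m : ℕ) where
  V : Type
  le : (Fin n ⊕ V ⊕ Fin m) → (Fin n ⊕ V ⊕ Fin m) → Prop
  label : V → L

/-- Well-formedness: `V` is finite, `le` is a partial order, the inputs are
minimal and the outputs are maximal. -/
def LP.WF {L : Type} {n m : ℕ} (P : LP L n m) : Prop :=
  Finite P.V ∧
  (∀ x, P.le x x) ∧
  (∀ {x y z}, P.le x y → P.le y z → P.le x z) ∧
  (∀ {x y}, P.le x y → P.le y x → x = y) ∧
  (∀ x i, P.le x (.inl i) → x = .inl i) ∧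
  (∀ o y, P.le (.inr (.inr o)) y → y = .inr (.inr o))

/-- Extend a bijection on labelled elements to the whole carrier. -/
def LP.mapEl {V W : Type} {n m : ℕ} (f : V → W) :
    (Fin n ⊕ V ⊕ Fin m) → (Fin n ⊕ W ⊕ Fin m) :=
  Sum.map id (Sum.map f id)

/-- Isomorphism of labelled posets: a label-preserving bijection on the
labelled elements which, extended by the identity on inputs and outputs,
preserves and reflects the order. -/
def LP.Iso {L : Type} {n m : ℕ} (P Q : LP L n m) : Prop :=
  ∃ f : P.V ≃ Q.V,
    (∀ v, Q.label (f v) = P.label v) ∧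
    (∀ x y, P.le x y ↔ Q.le (LP.mapEl f x) (LP.mapEl f y))

def relComp {n m k : ℕ} (R : Set (Fin n × Fin m)) (S : Set (Fin m × Fin k)) :
    Set (Fin n × Fin k) :=
  {p | ∃ b, (p.1, b) ∈ R ∧ (b, p.2) ∈ S}

def relId (n : ℕ) : Set (Fin n × Fin n) := {p | p.1 = p.2}

/-- The action of a relation `R ⊆ [n] × [n']` on a labelled poset: each order
relation `i ≤ e` from an input `i` is replaced by `i' ≤ e` for all
`(i,i') ∈ R` (re-closing transitively, which is automatic as inputs are
minimal). -/
def LP.act {L : Type} {n n' m : ℕ} (R : Set (Fin n × Fin n')) (P : LP L n m) :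
    LP L n' m where
  V := P.V
  le x y :=
    match x, y with
    | .inl i, .inl j => i = j
    | .inl i, .inr e => ∃ i₀, (i₀, i) ∈ R ∧ P.le (.inl i₀) (.inr e)
    | .inr _, .inl _ => False
    | .inr e, .inr e' => P.le (.inr e) (.inr e')
  label := P.label

/-- for each `m`, the assignment
`n ↦ {isomorphism classes of n-input m-output Σ-labelled posets}`, with the
above action of relations, defines a functor `FinRel → Set`: the action is
well-defined on isomorphism classes of well-formed posets, and satisfies the
identity and composition laws (up to isomorphism, i.e. on isomorphism
classes). -/
theorem lposet_functor_finRel (L : Type) (m : ℕ) :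
    (∀ {n n' : ℕ} (P : LP L n m) (R : Set (Fin n × Fin n')),
        P.WF → (P.act R).WF) ∧
    (∀ {n n' : ℕ} (P Q : LP L n m) (R : Set (Fin n × Fin n')),
        P.WF → Q.WF → P.Iso Q → (P.act R).Iso (Q.act R)) ∧
    (∀ {n : ℕ} (P : LP L n m), P.WF → (P.act (relId n)).Iso P) ∧
    (∀ {n n' n'' : ℕ} (P : LP L n m) (R : Set (Fin n × Fin n'))
        (S : Set (Fin n' × Fin n'')), P.WF →
        (P.act (relComp R S)).Iso ((P.act R).act S)) := by
  refine ⟨?_, ?_, ?_, ?_⟩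
  · -- well-definedness of the action on well-formed posets
    rintro n n' P R ⟨hfin, hrefl, htrans, hanti, hmin, hmax⟩
    refine ⟨hfin, ?_, ?_, ?_, ?_, ?_⟩
    · rintro (i | e)
      · rfl
      · exact hrefl _
    · rintro (i | e) (j | e') (k | e'') hxy hyz
      · exact hxy.trans hyz
      · cases hxy; exact hyz
      · exact hyz.elim
      · obtain ⟨i₀, hR, hle⟩ := hxy
        exact ⟨i₀, hR, htrans hle hyz⟩
      · exact hxy.elim
      · exact hxy.elim
      · exact hyz.elim
      · exact htrans hxy hyz
    · rintro (i | e) (j | e') hxy hyx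
      · exact congrArg _ hxy
      · exact hyx.elim
      · exact hxy.elim
      · exact congrArg _ (Sum.inr_injective (hanti hxy hyx))
    · rintro (j | e) i h
      · cases h; rfl
      · exact h.elim
    · rintro o (j | e') h
      · exact h.elim
      · exact congrArg _ (Sum.inr_injective (hmax o _ h))
  · -- well-definedness on isomorphism classes
    rintro n n' P Q R _ _ ⟨f, hlab, hle⟩
    refine ⟨f, hlab, ?_⟩
    rintro (i | e) (j | e')
    · exact Iff.rfl
    · exact exists_congr fun i₀ => and_congr_right fun _ => hle _ _
    · exact Iff.rfl
    · exact hle _ _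
  · -- identity law
    rintro n P ⟨_, hrefl, _, _, hmin, _⟩
    refine ⟨Equiv.refl _, fun _ => rfl, ?_⟩
    rintro (i | v | o) (j | v' | o')
    · exact ⟨fun h => h ▸ hrefl _, fun h => Sum.inl_injective (hmin _ j h)⟩
    · exact ⟨fun ⟨i₀, h, hle⟩ => (show i₀ = i from h) ▸ hle, fun h => ⟨i, rfl, h⟩⟩
    · exact ⟨fun ⟨i₀, h, hle⟩ => (show i₀ = i from h) ▸ hle, fun h => ⟨i, rfl, h⟩⟩
    · exact ⟨False.elim, fun h => by cases hmin _ j h⟩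
    · exact Iff.rfl
    · exact Iff.rfl
    · exact ⟨False.elim, fun h => by cases hmin _ j h⟩
    · exact Iff.rfl
    · exact Iff.rfl
  · -- composition law
    rintro n n' n'' P R S _
    refine ⟨Equiv.refl _, fun _ => rfl, ?_⟩
    rintro (i | v | o) (j | v' | o')
    · exact Iff.rfl
    · exact ⟨fun ⟨i₀, ⟨b, hR, hS⟩, hle⟩ => ⟨b, hS, i₀, hR, hle⟩,
        fun ⟨b, hS, i₀, hR, hle⟩ => ⟨i₀, ⟨b, hR, hS⟩, hle⟩⟩
    · exact ⟨fun ⟨i₀, ⟨b, hR, hS⟩, hle⟩ => ⟨b, hS, i₀, hR, hle⟩,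
        fun ⟨b, hS, i₀, hR, hle⟩ => ⟨i₀, ⟨b, hR, hS⟩, hle⟩⟩
    · exact Iff.rfl
    · exact Iff.rfl
    · exact Iff.rfl
    · exact Iff.rfl
    · exact Iff.rfl
    · exact Iff.rfl
end

section
/- The operation on labelled posets interpreting node_σ satisfies the commutativity axiom: applying node_σ at input n+1 and then node_τ at input n+2 yields the same (n+2)-input labelled poset, up to isomorphism, as applying node_τ at input n+2 and then node_σ at input n+1. -/
/-- Carrier map for the `node` operation: the fresh vertex stands where the
`k`-th input used to be; the fresh `k`-th input is new. -/
def LP.nodeStrip {L : Type} {n m : ℕ} (P : LP L n m) (k : Fin n) :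
    (Fin n ⊕ (P.V ⊕ Unit) ⊕ Fin m) → (Fin n ⊕ P.V ⊕ Fin m)
  | .inl i => .inl i
  | .inr (.inl (.inl v)) => .inr (.inl v)
  | .inr (.inl (.inr _)) => .inl k
  | .inr (.inr o) => .inr (.inr o)

/-- The `node_σ` operation at input position `k`: relabel the `k`-th input as
a new element labelled `σ`, and create a fresh `k`-th input placed
immediately below this new element (closing transitively). -/
def LP.node {L : Type} {n m : ℕ} (σ : L) (k : Fin n) (P : LP L n m) :
    LP L n m where
  V := P.V ⊕ Unit
  le x y :=
    match x, y with
    | .inl i, .inl j => i = j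
    | .inr _, .inl _ => False
    | x, y => P.le (P.nodeStrip k x) (P.nodeStrip k y)
  label := Sum.elim P.label (fun _ => σ)

def swapUnits {V : Type} : (V ⊕ Unit) ⊕ Unit ≃ (V ⊕ Unit) ⊕ Unit where
  toFun x := match x with
    | .inl (.inl v) => .inl (.inl v)
    | .inl (.inr u) => .inr u
    | .inr u => .inl (.inr u)
  invFun x := match x with
    | .inl (.inl v) => .inl (.inl v)
    | .inl (.inr u) => .inr u
    | .inr u => .inl (.inr u)
  left_inv x := by rcases x with (v | u) | u <;> rfl
  right_inv x := by rcases x with (v | u) | u <;> rfl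

/-- the operations interpreting `node` at distinct input
positions commute with each other, up to isomorphism.  In particular,
applying `node_σ` at input `n+1` and then `node_τ` at input `n+2` yields the
same labelled poset, up to isomorphism, as applying them in the other order;
this corresponds to the axiom
`node_σ(a₁, b₁.node_τ(a₂, b₂.x(b₁,b₂))) = node_τ(a₂, b₂.node_σ(a₁, b₁.x(b₁,b₂)))`. -/
theorem node_comm {L : Type} {n m : ℕ} (σ τ : L) (k₁ k₂ : Fin n)
    (P : LP L n m) (hP : P.WF) (hk : k₁ ≠ k₂) :
    ((P.node σ k₁).node τ k₂).Iso ((P.node τ k₂).node σ k₁) := by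
  obtain ⟨_, hrefl, _, _, hmin, _⟩ := hP
  refine ⟨swapUnits, ?_, ?_⟩
  · rintro ((v | u) | u) <;> rfl
  · have hle : ∀ i j : Fin n, P.le (.inl i) (.inl j) ↔ i = j := by
      intro i j
      constructor
      · intro h; exact Sum.inl_injective (hmin _ _ h)
      · rintro rfl; exact hrefl _
    have hnle : ∀ (x : P.V ⊕ Fin m) (i : Fin n), P.le (.inr x) (.inl i) ↔ False := by
      intro x i
      simp only [iff_false]
      intro h
      cases hmin _ _ h
    rintro (i | ((v | u) | u₂) | o) (j | ((w | u') | u₂') | o') <;>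
      dsimp only [LP.node, LP.mapEl, LP.nodeStrip, swapUnits, Sum.map, id,
        Equiv.coe_fn_mk, DFunLike.coe, EquivLike.coe, Sum.elim_inl, Sum.elim_inr, Function.comp] <;>
      try rfl
    all_goals
      try simp only [hle, hnle, iff_true, iff_false, true_iff, false_iff]
    all_goals first
      | rfl
      | exact hk
      | exact Ne.symm hk
end
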